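/- Vertical composition of Brauer diagrams is associative: for Brauer diagrams f : k → l, g : l → m, h : m → n, one has h ∘ (g ∘ f) = (h ∘ g) ∘ f, where the pairing of the composite is the composition pairing and the closed-component counts add according to κ(g∘f) = κ(f) + κ(g) + k(τ_f, τ_g). -/

import Mathlib

/-- A (monochrome) Brauer diagram from `m` to `n`: a pairing (fixed-point-free involution) `τ`
on the disjoint union of an `m`-element source and an `n`-element target set, together with
a natural number `closed` of closed components. -/
structure BrauerDiagram (m n : ℕ) where
  τ : Fin m ⊕ Fin n → Fin m ⊕ Fin n
  invol : Function.Involutive τ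
  nofix : ∀ x, τ x ≠ x
  closed : ℕ

namespace BrauerDiagram

variable {k l m n p m₁ n₁ m₂ n₂ : ℕ}

/-- The one-step relation on `Fin l ⊕ (Fin m ⊕ Fin n)` generated by the pairings of
`f : l → m` and `g : m → n` (identifying the target of `f` with the source of `g`). -/
def step (f : BrauerDiagram l m) (g : BrauerDiagram m n)
    (a b : Fin l ⊕ (Fin m ⊕ Fin n)) : Prop :=
  (∃ x : Fin l ⊕ Fin m,
      (Sum.map id Sum.inl x : Fin l ⊕ (Fin m ⊕ Fin n)) = a ∧
      (Sum.map id Sum.inl (f.τ x) : Fin l ⊕ (Fin m ⊕ Fin n)) = b) ∨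
  (∃ y : Fin m ⊕ Fin n,
      (Sum.inr y : Fin l ⊕ (Fin m ⊕ Fin n)) = a ∧
      (Sum.inr (g.τ y) : Fin l ⊕ (Fin m ⊕ Fin n)) = b)

/-- Two points of the composite picture are connected if they are related by the
equivalence relation generated by the two pairings. -/
def conn (f : BrauerDiagram l m) (g : BrauerDiagram m n) :
    Fin l ⊕ (Fin m ⊕ Fin n) → Fin l ⊕ (Fin m ⊕ Fin n) → Prop :=
  Relation.EqvGen (step f g)

/-- The embedding of the outer boundary into the composite picture. -/
def embO (x : Fin l ⊕ Fin n) : Fin l ⊕ (Fin m ⊕ Fin n) := Sum.map id Sum.inr x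

/-- A middle point is closed if it lies on no component meeting the outer boundary. -/
def IsClosedMid (f : BrauerDiagram l m) (g : BrauerDiagram m n) (b : Fin m) : Prop :=
  ∀ z : Fin l ⊕ Fin n, ¬ conn f g (Sum.inr (Sum.inl b)) (embO z)

/-- The number of closed components formed by the composition of the two pairings:
the number of equivalence classes of closed middle points. -/
noncomputable def newClosed (f : BrauerDiagram l m) (g : BrauerDiagram m n) : ℕ :=
  Nat.card (Quotient (Setoid.comap
    (fun b : {b : Fin m // IsClosedMid f g b} =>
      (Sum.inr (Sum.inl b.1) : Fin l ⊕ (Fin m ⊕ Fin n)))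
    (Relation.EqvGen.setoid (step f g))))

/-- `IsComp f g h` says that `h` is the vertical composite `g ∘ f` of the Brauer diagrams
`f : l → m` and `g : m → n`: its pairing matches two outer boundary points exactly when they
are connected through the two pairings, and its number of closed components is the sum of
those of `f` and of `g` together with the closed components formed by the composition. -/
def IsComp (f : BrauerDiagram l m) (g : BrauerDiagram m n) (h : BrauerDiagram l n) : Prop :=
  (∀ x y : Fin l ⊕ Fin n, h.τ x = y ↔ (y ≠ x ∧ conn f g (embO x) (embO y))) ∧
  h.closed = f.closed + g.closed + newClosed f g

/-- The identity Brauer diagram on `n`, induced by the pairing `sᵢ ↦ tᵢ`. -/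
def idBD (n : ℕ) : BrauerDiagram n n where
  τ := Sum.swap
  invol := Sum.swap_swap
  nofix := by intro x; cases x <;> simp
  closed := 0

/-- The open Brauer diagram of a bijection (in particular of a permutation when `m = n`),
induced by the pairing `sᵢ ↦ t_{σ(i)}`. -/
def permBD (e : Fin m ≃ Fin n) : BrauerDiagram m n where
  τ := Sum.elim (fun i => Sum.inr (e i)) (fun j => Sum.inl (e.symm j))
  invol := by intro x; cases x <;> simp
  nofix := by intro x; cases x <;> simp
  closed := 0



/-- Horizontal (monoidal) sum of Brauer diagrams, given by juxtaposition. -/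
def hsum (f : BrauerDiagram m₁ n₁) (g : BrauerDiagram m₂ n₂) :
    BrauerDiagram (m₁ + m₂) (n₁ + n₂) :=
  letI E : ((Fin m₁ ⊕ Fin n₁) ⊕ (Fin m₂ ⊕ Fin n₂)) ≃ (Fin (m₁ + m₂) ⊕ Fin (n₁ + n₂)) :=
    (Equiv.sumSumSumComm (Fin m₁) (Fin n₁) (Fin m₂) (Fin n₂)).trans
      (Equiv.sumCongr finSumFinEquiv finSumFinEquiv)
  { τ := fun x => E (Sum.map f.τ g.τ (E.symm x))
    invol := by
      intro x
      dsimp only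
      rw [Equiv.symm_apply_apply]
      rcases h : E.symm x with a | b
      · simp only [Sum.map_inl, f.invol a]
        rw [← h, Equiv.apply_symm_apply]
      · simp only [Sum.map_inr, g.invol b]
        rw [← h, Equiv.apply_symm_apply]
    nofix := by
      intro x hx
      have h' : Sum.map f.τ g.τ (E.symm x) = E.symm x := by
        apply E.injective
        rw [hx, Equiv.apply_symm_apply]
      rcases h : E.symm x with a | b
      · rw [h] at h'
        exact f.nofix a (by simpa using h')
      · rw [h] at h'
        exact g.nofix b (by simpa using h')
    closed := f.closed + g.closed }

/-- The cup `∪ : 0 → 2`, induced by the unique pairing on a two-element set. -/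
def cup : BrauerDiagram 0 2 where
  τ := Sum.map id (fun j => ⟨1 - j.val, by omega⟩)
  invol := by
    intro x
    rcases x with a | j
    · exact a.elim0
    · simp only [Sum.map_inr, id_eq]
      congr 1
      ext
      simp
      omega
  nofix := by
    intro x
    rcases x with a | j
    · exact a.elim0
    · simp only [Sum.map_inr, id_eq, ne_eq, Sum.inr.injEq]
      intro h
      have := congrArg Fin.val h
      simp at this
      omega
  closed := 0

/-- The cap `∩ : 2 → 0`, induced by the unique pairing on a two-element set. -/
def cap : BrauerDiagram 2 0 where
  τ := Sum.map (fun j => ⟨1 - j.val, by omega⟩) id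
  invol := by
    intro x
    rcases x with j | a
    · simp only [Sum.map_inl, id_eq]
      congr 1
      ext
      simp
      omega
    · exact a.elim0
  nofix := by
    intro x
    rcases x with j | a
    · simp only [Sum.map_inl, id_eq, ne_eq, Sum.inl.injEq]
      intro h
      have := congrArg Fin.val h
      simp at this
      omega
    · exact a.elim0
  closed := 0

/-- The closed circle `○ = (∅, 1) : 0 → 0`: the empty pairing with one closed component. -/
def circle : BrauerDiagram 0 0 where
  τ := fun x => x
  invol := fun _ => rfl
  nofix := fun x => x.elim (fun a => a.elim0) (fun a => a.elim0)
  closed := 1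

/-- A Brauer diagram is downward if it is open and its pairing sends every target element
into the source set. -/
def Downward (f : BrauerDiagram m n) : Prop :=
  f.closed = 0 ∧ ∀ j : Fin n, ∃ i : Fin m, f.τ (Sum.inr j) = Sum.inl i

/-- A Brauer diagram is upward if it is open and its pairing sends every source element
into the target set. -/
def Upward (f : BrauerDiagram m n) : Prop :=
  f.closed = 0 ∧ ∀ i : Fin m, ∃ j : Fin n, f.τ (Sum.inl i) = Sum.inr j

end BrauerDiagram

open BrauerDiagram

section BrauerAssocAux

open BrauerDiagram Relation

/-! ### Abstract "Q" construction -/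

section AbstractQ

variable {Mid Out Inn U : Type*}
variable (cI : Inn → Inn → Prop) (cO : Out → Out → Prop)
variable (inB : Mid → Inn) (em : U → Inn) (jm : U → Out)

/-- Link between a middle point and an outer point. -/
def ALink (b : Mid) (x : Out) : Prop := ∃ u : U, cI (inB b) (em u) ∧ cO (jm u) x

/-- The lifted relation on the disjoint union of outer and middle points. -/
def AQ : Out ⊕ Mid → Out ⊕ Mid → Prop
  | .inl x, .inl y => cO x y
  | .inl x, .inr b => ALink cI cO inB em jm b x
  | .inr b, .inl y => ALink cI cO inB em jm b y
  | .inr b, .inr b' => cI (inB b) (inB b') ∨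
      ∃ u v : U, cI (inB b) (em u) ∧ cI (inB b') (em v) ∧ cO (jm u) (jm v)

variable {cI cO inB em jm}

lemma AQ_refl (hI : Equivalence cI) (hO : Equivalence cO) :
    ∀ p, AQ cI cO inB em jm p p
  | .inl _ => hO.refl _
  | .inr _ => Or.inl (hI.refl _)

lemma AQ_symm (hI : Equivalence cI) (hO : Equivalence cO) :
    ∀ p q, AQ cI cO inB em jm p q → AQ cI cO inB em jm q p
  | .inl _, .inl _, h => hO.symm h
  | .inl _, .inr _, h => h
  | .inr _, .inl _, h => h
  | .inr _, .inr _, h =>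
      h.imp hI.symm (fun ⟨u, v, h1, h2, h3⟩ => ⟨v, u, h2, h1, hO.symm h3⟩)

lemma AQ_trans (hI : Equivalence cI) (hO : Equivalence cO)
    (glue : ∀ u v, cI (em u) (em v) → cO (jm u) (jm v)) :
    ∀ p q r, AQ cI cO inB em jm p q → AQ cI cO inB em jm q r →
    AQ cI cO inB em jm p r := by
  rintro (x | b) (y | b') (z | b'') hpq hqr
  · exact hO.trans hpq hqr
  · obtain ⟨u, h1, h2⟩ := hqr
    exact ⟨u, h1, hO.trans h2 (hO.symm hpq)⟩
  · obtain ⟨u, h1, h2⟩ := hpq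
    obtain ⟨v, h3, h4⟩ := hqr
    exact hO.trans (hO.symm h2) (hO.trans (glue u v (hI.trans (hI.symm h1) h3)) h4)
  · obtain ⟨u, h1, h2⟩ := hpq
    rcases hqr with hbb | ⟨u', v', h3, h4, h5⟩
    · exact ⟨u, hI.trans (hI.symm hbb) h1, h2⟩
    · exact ⟨v', h4, hO.trans (hO.symm h5)
        (hO.trans (glue u' u (hI.trans (hI.symm h3) h1)) h2)⟩
  · obtain ⟨u, h1, h2⟩ := hpq
    exact ⟨u, h1, hO.trans h2 hqr⟩
  · obtain ⟨u, h1, h2⟩ := hpq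
    obtain ⟨v, h3, h4⟩ := hqr
    exact Or.inr ⟨u, v, h1, h3, hO.trans h2 (hO.symm h4)⟩
  · rcases hpq with hbb | ⟨u, v, h1, h2, h5⟩
    · obtain ⟨u, h3, h4⟩ := hqr
      exact ⟨u, hI.trans hbb h3, h4⟩
    · obtain ⟨u', h3, h4⟩ := hqr
      exact ⟨u, h1, hO.trans h5 (hO.trans (glue v u' (hI.trans (hI.symm h2) h3)) h4)⟩
  · rcases hpq with hbb | ⟨u, v, h1, h2, h5⟩ <;> rcases hqr with hcc | ⟨u', v', h3, h4, h6⟩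
    · exact Or.inl (hI.trans hbb hcc)
    · exact Or.inr ⟨u', v', hI.trans hbb h3, h4, h6⟩
    · exact Or.inr ⟨u, v, h1, hI.trans (hI.symm hcc) h2, h5⟩
    · exact Or.inr ⟨u, v', h1, h4,
        hO.trans h5 (hO.trans (glue v u' (hI.trans (hI.symm h2) h3)) h6)⟩

end AbstractQ

/-! ### The three-layer picture -/

variable {k l m n : ℕ}

/-- The three-layer composite picture. -/
abbrev T3 (k l m n : ℕ) := Fin k ⊕ (Fin l ⊕ (Fin m ⊕ Fin n))

variable (f : BrauerDiagram k l) (g : BrauerDiagram l m) (h : BrauerDiagram m n)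

def eA1 : Fin k ⊕ Fin l → T3 k l m n := Sum.map id Sum.inl
def eA2 : Fin l ⊕ Fin m → T3 k l m n := fun x => Sum.inr (Sum.map id Sum.inl x)
def eA3 : Fin m ⊕ Fin n → T3 k l m n := fun x => Sum.inr (Sum.inr x)
def eA12 : Fin k ⊕ (Fin l ⊕ Fin m) → T3 k l m n := Sum.map id (Sum.map id Sum.inl)
def eA23 : Fin l ⊕ (Fin m ⊕ Fin n) → T3 k l m n := Sum.inr
def iB : Fin k ⊕ (Fin m ⊕ Fin n) → T3 k l m n := Sum.map id Sum.inr
def iC : Fin k ⊕ (Fin l ⊕ Fin n) → T3 k l m n := Sum.map id (Sum.map id Sum.inr)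
def eO : Fin k ⊕ Fin n → T3 k l m n := Sum.map id (fun d => Sum.inr (Sum.inr d))

/-- The one-step relation of the three-layer picture. -/
def step3 (z w : T3 k l m n) : Prop :=
  (∃ x, eA1 x = z ∧ eA1 (f.τ x) = w) ∨
  (∃ x, eA2 x = z ∧ eA2 (g.τ x) = w) ∨
  (∃ x, eA3 x = z ∧ eA3 (h.τ x) = w)

/-- Connectivity in the three-layer picture. -/
def conn3 : T3 k l m n → T3 k l m n → Prop := Relation.EqvGen (step3 f g h)

lemma step3_symm {z w : T3 k l m n} (hs : step3 f g h z w) : step3 f g h w z := by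
  rcases hs with ⟨x, rfl, rfl⟩ | ⟨x, rfl, rfl⟩ | ⟨x, rfl, rfl⟩
  · exact Or.inl ⟨f.τ x, rfl, by rw [f.invol]⟩
  · exact Or.inr (Or.inl ⟨g.τ x, rfl, by rw [g.invol]⟩)
  · exact Or.inr (Or.inr ⟨h.τ x, rfl, by rw [h.invol]⟩)

lemma eA12_eA1 (x : Fin k ⊕ Fin l) :
    eA12 (Sum.map id Sum.inl x) = (eA1 x : T3 k l m n) := by cases x <;> rfl
lemma eA23_eA2 (x : Fin l ⊕ Fin m) :
    eA23 (Sum.map id Sum.inl x) = (eA2 x : T3 k l m n) := by cases x <;> rfl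
lemma iB_jm (x : Fin k ⊕ Fin m) :
    iB (Sum.map id Sum.inl x) = (eA12 (Sum.map id Sum.inr x) : T3 k l m n) := by
  cases x <;> rfl
lemma iC_eA1 (x : Fin k ⊕ Fin l) :
    iC (Sum.map id Sum.inl x) = (eA1 x : T3 k l m n) := by cases x <;> rfl
lemma iC_jln (x : Fin l ⊕ Fin n) :
    iC (Sum.inr x) = (eA23 (Sum.map id Sum.inr x) : T3 k l m n) := by cases x <;> rfl
lemma iB_embO (x : Fin k ⊕ Fin n) : iB (embO x) = (eO x : T3 k l m n) := by cases x <;> rfl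
lemma iC_embO (x : Fin k ⊕ Fin n) : iC (embO x) = (eO x : T3 k l m n) := by cases x <;> rfl

lemma eA12_inj : Function.Injective (eA12 : _ → T3 k l m n) := by
  rintro (a | b | c) (a' | b' | c') hxy <;> simp_all [eA12]

lemma step_fg_3 {a b} (hs : step f g a b) : step3 f g h (eA12 a) (eA12 b) := by
  rcases hs with ⟨x, rfl, rfl⟩ | ⟨x, rfl, rfl⟩
  · exact Or.inl ⟨x, (eA12_eA1 x).symm, (eA12_eA1 _).symm⟩
  · exact Or.inr (Or.inl ⟨x, rfl, rfl⟩)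

lemma step_gh_3 {a b} (hs : step g h a b) : step3 f g h (eA23 a) (eA23 b) := by
  rcases hs with ⟨x, rfl, rfl⟩ | ⟨x, rfl, rfl⟩
  · exact Or.inr (Or.inl ⟨x, (eA23_eA2 x).symm, (eA23_eA2 _).symm⟩)
  · exact Or.inr (Or.inr ⟨x, rfl, rfl⟩)

lemma conn_fg_3 {a b} (hc : conn f g a b) : conn3 f g h (eA12 a) (eA12 b) := by
  induction hc with
  | rel _ _ hs => exact Relation.EqvGen.rel _ _ (step_fg_3 f g h hs)
  | refl _ => exact Relation.EqvGen.refl _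
  | symm _ _ _ ih => exact Relation.EqvGen.symm _ _ ih
  | trans _ _ _ _ _ ih1 ih2 => exact Relation.EqvGen.trans _ _ _ ih1 ih2

lemma conn_gh_3 {a b} (hc : conn g h a b) : conn3 f g h (eA23 a) (eA23 b) := by
  induction hc with
  | rel _ _ hs => exact Relation.EqvGen.rel _ _ (step_gh_3 f g h hs)
  | refl _ => exact Relation.EqvGen.refl _
  | symm _ _ _ ih => exact Relation.EqvGen.symm _ _ ih
  | trans _ _ _ _ _ ih1 ih2 => exact Relation.EqvGen.trans _ _ _ ih1 ih2

variable (gf : BrauerDiagram k m) (hg : BrauerDiagram l n)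

lemma step_gfh_3 (hgf : IsComp f g gf) {a b} (hs : step gf h a b) :
    conn3 f g h (iB a) (iB b) := by
  rcases hs with ⟨x, rfl, rfl⟩ | ⟨x, rfl, rfl⟩
  · have hc := ((hgf.1 x _).mp rfl).2
    have h3 := conn_fg_3 f g h hc
    simp only [embO] at h3
    rw [iB_jm, iB_jm]
    exact h3
  · exact Relation.EqvGen.rel _ _ (Or.inr (Or.inr ⟨x, rfl, rfl⟩))

lemma step_fhg_3 (hhg : IsComp g h hg) {a b} (hs : step f hg a b) :
    conn3 f g h (iC a) (iC b) := by
  rcases hs with ⟨x, rfl, rfl⟩ | ⟨x, rfl, rfl⟩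
  · exact Relation.EqvGen.rel _ _ (Or.inl ⟨x, (iC_eA1 x).symm, (iC_eA1 _).symm⟩)
  · have hc := ((hhg.1 x _).mp rfl).2
    have h3 := conn_gh_3 f g h hc
    simp only [embO] at h3
    rw [iC_jln, iC_jln]
    exact h3

lemma conn_gfh_3 (hgf : IsComp f g gf) {a b} (hc : conn gf h a b) :
    conn3 f g h (iB a) (iB b) := by
  induction hc with
  | rel _ _ hs => exact step_gfh_3 f g h gf hgf hs
  | refl _ => exact Relation.EqvGen.refl _
  | symm _ _ _ ih => exact Relation.EqvGen.symm _ _ ih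
  | trans _ _ _ _ _ ih1 ih2 => exact Relation.EqvGen.trans _ _ _ ih1 ih2

lemma conn_fhg_3 (hhg : IsComp g h hg) {a b} (hc : conn f hg a b) :
    conn3 f g h (iC a) (iC b) := by
  induction hc with
  | rel _ _ hs => exact step_fhg_3 f g h hg hhg hs
  | refl _ => exact Relation.EqvGen.refl _
  | symm _ _ _ ih => exact Relation.EqvGen.symm _ _ ih
  | trans _ _ _ _ _ ih1 ih2 => exact Relation.EqvGen.trans _ _ _ ih1 ih2

/-! ### Eliminating the first middle layer -/

def cB : T3 k l m n → (Fin k ⊕ (Fin m ⊕ Fin n)) ⊕ Fin l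
  | .inl a => .inl (.inl a)
  | .inr (.inl b) => .inr b
  | .inr (.inr x) => .inl (.inr x)

/-- The relation on the three-layer picture obtained by lifting `conn gf h`. -/
def QB (z w : T3 k l m n) : Prop :=
  AQ (conn f g) (conn gf h) (fun b : Fin l => Sum.inr (Sum.inl b))
     (Sum.map id Sum.inr) (Sum.map id Sum.inl) (cB z) (cB w)

lemma glueB (hgf : IsComp f g gf) : ∀ u v : Fin k ⊕ Fin m,
    conn f g (Sum.map id Sum.inr u) (Sum.map id Sum.inr v) →
    conn gf h (Sum.map id Sum.inl u) (Sum.map id Sum.inl v) := by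
  intro u v hc
  by_cases huv : u = v
  · subst huv; exact Relation.EqvGen.refl _
  · have ht : gf.τ u = v := (hgf.1 u v).mpr ⟨Ne.symm huv, hc⟩
    exact Relation.EqvGen.rel _ _ (Or.inl ⟨u, rfl, by rw [ht]⟩)

lemma step3_QB (hgf : IsComp f g gf) {z w : T3 k l m n} (hs : step3 f g h z w) :
    QB f g h gf z w := by
  rcases hs with ⟨x, rfl, rfl⟩ | ⟨x, rfl, rfl⟩ | ⟨x, rfl, rfl⟩
  · rcases x with a | b
    · rcases hx : f.τ (Sum.inl a) with a' | b
      · exact glueB f g h gf hgf (Sum.inl a) (Sum.inl a')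
          (Relation.EqvGen.rel _ _ (Or.inl ⟨Sum.inl a, rfl, by rw [hx]; try rfl⟩))
      · exact ⟨Sum.inl a,
          Relation.EqvGen.symm _ _
            (Relation.EqvGen.rel _ _ (Or.inl ⟨Sum.inl a, rfl, by rw [hx]; try rfl⟩)),
          Relation.EqvGen.refl _⟩
    · rcases hx : f.τ (Sum.inr b) with a | b'
      · exact ⟨Sum.inl a,
          Relation.EqvGen.rel _ _ (Or.inl ⟨Sum.inr b, rfl, by rw [hx]; try rfl⟩),
          Relation.EqvGen.refl _⟩
      · exact Or.inl (Relation.EqvGen.rel _ _ (Or.inl ⟨Sum.inr b, rfl, by rw [hx]; try rfl⟩))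
  · rcases x with b | c
    · rcases hx : g.τ (Sum.inl b) with b' | c
      · exact Or.inl (Relation.EqvGen.rel _ _ (Or.inr ⟨Sum.inl b, rfl, by rw [hx]; try rfl⟩))
      · exact ⟨Sum.inr c,
          Relation.EqvGen.rel _ _ (Or.inr ⟨Sum.inl b, rfl, by rw [hx]; try rfl⟩),
          Relation.EqvGen.refl _⟩
    · rcases hx : g.τ (Sum.inr c) with b | c'
      · exact ⟨Sum.inr c,
          Relation.EqvGen.symm _ _
            (Relation.EqvGen.rel _ _ (Or.inr ⟨Sum.inr c, rfl, by rw [hx]; try rfl⟩)),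
          Relation.EqvGen.refl _⟩
      · exact glueB f g h gf hgf (Sum.inr c) (Sum.inr c')
          (Relation.EqvGen.rel _ _ (Or.inr ⟨Sum.inr c, rfl, by rw [hx]; try rfl⟩))
  · exact Relation.EqvGen.rel _ _ (Or.inr ⟨x, rfl, rfl⟩)

lemma conn3_QB (hgf : IsComp f g gf) {z w : T3 k l m n} (hc : conn3 f g h z w) :
    QB f g h gf z w := by
  have hI : Equivalence (conn f g) := Relation.EqvGen.is_equivalence _
  have hO : Equivalence (conn gf h) := Relation.EqvGen.is_equivalence _
  induction hc with
  | rel _ _ hs => exact step3_QB f g h gf hgf hs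
  | refl _ => exact AQ_refl hI hO _
  | symm _ _ _ ih => exact AQ_symm hI hO _ _ ih
  | trans _ _ _ _ _ ih1 ih2 => exact AQ_trans hI hO (glueB f g h gf hgf) _ _ _ ih1 ih2

lemma cB_iB (x : Fin k ⊕ (Fin m ⊕ Fin n)) :
    cB (iB x : T3 k l m n) = Sum.inl x := by rcases x with a | x <;> rfl

lemma connB_iff (hgf : IsComp f g gf) (x y : Fin k ⊕ (Fin m ⊕ Fin n)) :
    conn gf h x y ↔ conn3 f g h (iB x) (iB y) := by
  constructor
  · exact conn_gfh_3 f g h gf hgf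
  · intro hc
    have hq := conn3_QB f g h gf hgf hc
    unfold QB at hq
    rw [cB_iB, cB_iB] at hq
    exact hq

/-! ### Eliminating the second middle layer -/

def cC : T3 k l m n → (Fin k ⊕ (Fin l ⊕ Fin n)) ⊕ Fin m
  | .inl a => .inl (.inl a)
  | .inr (.inl b) => .inl (.inr (.inl b))
  | .inr (.inr (.inl c)) => .inr c
  | .inr (.inr (.inr d)) => .inl (.inr (.inr d))

/-- The relation on the three-layer picture obtained by lifting `conn f hg`. -/
def QC (z w : T3 k l m n) : Prop :=
  AQ (conn g h) (conn f hg) (fun c : Fin m => Sum.inr (Sum.inl c))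
     (Sum.map id Sum.inr) Sum.inr (cC z) (cC w)

lemma glueC (hhg : IsComp g h hg) : ∀ u v : Fin l ⊕ Fin n,
    conn g h (Sum.map id Sum.inr u) (Sum.map id Sum.inr v) →
    conn f hg (Sum.inr u) (Sum.inr v) := by
  intro u v hc
  by_cases huv : u = v
  · subst huv; exact Relation.EqvGen.refl _
  · have ht : hg.τ u = v := (hhg.1 u v).mpr ⟨Ne.symm huv, hc⟩
    exact Relation.EqvGen.rel _ _ (Or.inr ⟨u, rfl, by rw [ht]⟩)

lemma cC_eA1 (x : Fin k ⊕ Fin l) :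
    cC (eA1 x : T3 k l m n) = Sum.inl (Sum.map id Sum.inl x) := by cases x <;> rfl

lemma step3_QC (hhg : IsComp g h hg) {z w : T3 k l m n} (hs : step3 f g h z w) :
    QC f g h hg z w := by
  rcases hs with ⟨x, rfl, rfl⟩ | ⟨x, rfl, rfl⟩ | ⟨x, rfl, rfl⟩
  · show AQ _ _ _ _ _ (cC (eA1 x)) (cC (eA1 (f.τ x)))
    rw [cC_eA1, cC_eA1]
    exact Relation.EqvGen.rel _ _ (Or.inl ⟨x, rfl, rfl⟩)
  · rcases x with b | c
    · rcases hx : g.τ (Sum.inl b) with b' | c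
      · exact glueC f g h hg hhg (Sum.inl b) (Sum.inl b')
          (Relation.EqvGen.rel _ _ (Or.inl ⟨Sum.inl b, rfl, by rw [hx]; try rfl⟩))
      · exact ⟨Sum.inl b,
          Relation.EqvGen.symm _ _
            (Relation.EqvGen.rel _ _ (Or.inl ⟨Sum.inl b, rfl, by rw [hx]; try rfl⟩)),
          Relation.EqvGen.refl _⟩
    · rcases hx : g.τ (Sum.inr c) with b | c'
      · exact ⟨Sum.inl b,
          Relation.EqvGen.rel _ _ (Or.inl ⟨Sum.inr c, rfl, by rw [hx]; try rfl⟩),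
          Relation.EqvGen.refl _⟩
      · exact Or.inl (Relation.EqvGen.rel _ _ (Or.inl ⟨Sum.inr c, rfl, by rw [hx]; try rfl⟩))
  · rcases x with c | d
    · rcases hx : h.τ (Sum.inl c) with c' | d
      · exact Or.inl (Relation.EqvGen.rel _ _ (Or.inr ⟨Sum.inl c, rfl, by rw [hx]; try rfl⟩))
      · exact ⟨Sum.inr d,
          Relation.EqvGen.rel _ _ (Or.inr ⟨Sum.inl c, rfl, by rw [hx]; try rfl⟩),
          Relation.EqvGen.refl _⟩
    · rcases hx : h.τ (Sum.inr d) with c | d'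
      · exact ⟨Sum.inr d,
          Relation.EqvGen.symm _ _
            (Relation.EqvGen.rel _ _ (Or.inr ⟨Sum.inr d, rfl, by rw [hx]; try rfl⟩)),
          Relation.EqvGen.refl _⟩
      · exact glueC f g h hg hhg (Sum.inr d) (Sum.inr d')
          (Relation.EqvGen.rel _ _ (Or.inr ⟨Sum.inr d, rfl, by rw [hx]; try rfl⟩))

lemma conn3_QC (hhg : IsComp g h hg) {z w : T3 k l m n} (hc : conn3 f g h z w) :
    QC f g h hg z w := by
  have hI : Equivalence (conn g h) := Relation.EqvGen.is_equivalence _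
  have hO : Equivalence (conn f hg) := Relation.EqvGen.is_equivalence _
  induction hc with
  | rel _ _ hs => exact step3_QC f g h hg hhg hs
  | refl _ => exact AQ_refl hI hO _
  | symm _ _ _ ih => exact AQ_symm hI hO _ _ ih
  | trans _ _ _ _ _ ih1 ih2 => exact AQ_trans hI hO (glueC f g h hg hhg) _ _ _ ih1 ih2

lemma cC_iC (x : Fin k ⊕ (Fin l ⊕ Fin n)) :
    cC (iC x : T3 k l m n) = Sum.inl x := by rcases x with a | b | d <;> rfl

lemma connC_iff (hhg : IsComp g h hg) (x y : Fin k ⊕ (Fin l ⊕ Fin n)) :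
    conn f hg x y ↔ conn3 f g h (iC x) (iC y) := by
  constructor
  · exact conn_fhg_3 f g h hg hhg
  · intro hc
    have hq := conn3_QC f g h hg hhg hc
    unfold QC at hq
    rw [cC_iC, cC_iC] at hq
    exact hq

/-! ### Closed components -/

lemma conn3_of_closedB {b : Fin l} (hb : IsClosedMid f g b) {w : T3 k l m n}
    (hc : conn3 f g h (eA2 (Sum.inl b)) w) :
    ∃ u, eA12 u = w ∧ conn f g (Sum.inr (Sum.inl b)) u := by
  let P : T3 k l m n → Prop :=
    fun w => ∃ u, eA12 u = w ∧ conn f g (Sum.inr (Sum.inl b)) u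
  have key : ∀ z w, step3 f g h z w → P z → P w := by
    rintro z w (⟨x, rfl, rfl⟩ | ⟨x, rfl, rfl⟩ | ⟨x, rfl, rfl⟩) ⟨u, hu, hcu⟩
    · obtain rfl : u = Sum.map id Sum.inl x := eA12_inj (by rw [hu, eA12_eA1])
      refine ⟨Sum.map id Sum.inl (f.τ x), eA12_eA1 _, ?_⟩
      exact Relation.EqvGen.trans _ _ _ hcu
        (Relation.EqvGen.rel _ _ (Or.inl ⟨x, rfl, rfl⟩))
    · obtain rfl : u = Sum.inr x := eA12_inj hu
      refine ⟨Sum.inr (g.τ x), rfl, ?_⟩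
      exact Relation.EqvGen.trans _ _ _ hcu
        (Relation.EqvGen.rel _ _ (Or.inr ⟨x, rfl, rfl⟩))
    · exfalso
      rcases x with c | d
      · rcases u with a | b' | c'
        · simp [eA12, eA3] at hu
        · simp [eA12, eA3] at hu
        · obtain rfl : c' = c := by simpa [eA12, eA3] using hu
          exact hb (Sum.inr c') hcu
      · rcases u with a | b' | c' <;> simp [eA12, eA3] at hu
  have hiff : ∀ z w, conn3 f g h z w → (P z ↔ P w) := by
    intro z w hzw
    induction hzw with
    | rel _ _ hs => exact ⟨key _ _ hs, key _ _ (step3_symm f g h hs)⟩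
    | refl _ => exact Iff.rfl
    | symm _ _ _ ih => exact ih.symm
    | trans _ _ _ _ _ ih1 ih2 => exact ih1.trans ih2
  exact (hiff _ _ hc).mp ⟨Sum.inr (Sum.inl b), rfl, Relation.EqvGen.refl _⟩

lemma conn3_of_closedC {c : Fin m} (hcm : IsClosedMid g h c) {w : T3 k l m n}
    (hc : conn3 f g h (eA2 (Sum.inr c)) w) :
    ∃ u, eA23 u = w ∧ conn g h (Sum.inr (Sum.inl c)) u := by
  let P : T3 k l m n → Prop :=
    fun w => ∃ u, eA23 u = w ∧ conn g h (Sum.inr (Sum.inl c)) u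
  have key : ∀ z w, step3 f g h z w → P z → P w := by
    rintro z w (⟨x, rfl, rfl⟩ | ⟨x, rfl, rfl⟩ | ⟨x, rfl, rfl⟩) ⟨u, hu, hcu⟩
    · exfalso
      rcases x with a | b'
      · simp [eA23, eA1] at hu
      · obtain rfl : u = Sum.inl b' := by simpa [eA23, eA1] using hu
        exact hcm (Sum.inl b') hcu
    · obtain rfl : u = Sum.map id Sum.inl x :=
        Sum.inr_injective (hu.trans (eA23_eA2 x).symm)
      refine ⟨Sum.map id Sum.inl (g.τ x), eA23_eA2 _, ?_⟩
      exact Relation.EqvGen.trans _ _ _ hcu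
        (Relation.EqvGen.rel _ _ (Or.inl ⟨x, rfl, rfl⟩))
    · obtain rfl : u = Sum.inr x := Sum.inr_injective hu
      refine ⟨Sum.inr (h.τ x), rfl, ?_⟩
      exact Relation.EqvGen.trans _ _ _ hcu
        (Relation.EqvGen.rel _ _ (Or.inr ⟨x, rfl, rfl⟩))
  have hiff : ∀ z w, conn3 f g h z w → (P z ↔ P w) := by
    intro z w hzw
    induction hzw with
    | rel _ _ hs => exact ⟨key _ _ hs, key _ _ (step3_symm f g h hs)⟩
    | refl _ => exact Iff.rfl
    | symm _ _ _ ih => exact ih.symm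
    | trans _ _ _ _ _ ih1 ih2 => exact ih1.trans ih2
  exact (hiff _ _ hc).mp ⟨Sum.inr (Sum.inl c), rfl, Relation.EqvGen.refl _⟩

/-- A middle point of the three-layer picture is closed if its component misses the
outer boundary. -/
def Closed3 (w : Fin l ⊕ Fin m) : Prop :=
  ∀ z : Fin k ⊕ Fin n, ¬ conn3 f g h (eA2 w) (eO z)

lemma closed3_of_fg {b : Fin l} (hb : IsClosedMid f g b) :
    Closed3 f g h (Sum.inl b) := by
  intro z hcz
  obtain ⟨u, hu, hcu⟩ := conn3_of_closedB f g h hb hcz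
  rcases z with a | d
  · obtain rfl : u = Sum.inl a := eA12_inj (by rw [hu]; rfl)
    exact hb (Sum.inl a) hcu
  · rcases u with a | b' | c' <;> simp [eA12, eO] at hu

lemma closed3_of_gfh (hgf : IsComp f g gf) {c : Fin m} (hc : IsClosedMid gf h c) :
    Closed3 f g h (Sum.inr c) := by
  intro z hcz
  refine hc z ((connB_iff f g h gf hgf _ _).mpr ?_)
  rw [iB_embO]
  exact hcz

lemma closed3_of_gh {c : Fin m} (hc : IsClosedMid g h c) :
    Closed3 f g h (Sum.inr c) := by
  intro z hcz
  obtain ⟨u, hu, hcu⟩ := conn3_of_closedC f g h hc hcz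
  rcases z with a | d
  · simp [eA23, eO] at hu
  · obtain rfl : u = Sum.inr (Sum.inr d) := Sum.inr_injective hu
    exact hc (Sum.inr d) hcu

lemma closed3_of_fhg (hhg : IsComp g h hg) {b : Fin l} (hb : IsClosedMid f hg b) :
    Closed3 f g h (Sum.inl b) := by
  intro z hcz
  refine hb z ((connC_iff f g h hg hhg _ _).mpr ?_)
  rw [iC_embO]
  exact hcz

/-- The number of closed components of the three-layer picture. -/
noncomputable def closed3Count : ℕ :=
  Nat.card (Quotient (Setoid.comap
    (fun w : {w : Fin l ⊕ Fin m // Closed3 f g h w} => eA2 w.1)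
    (Relation.EqvGen.setoid (step3 f g h))))

def phiFG : Quotient (Setoid.comap
      (fun b : {b : Fin l // IsClosedMid f g b} =>
        (Sum.inr (Sum.inl b.1) : Fin k ⊕ (Fin l ⊕ Fin m)))
      (Relation.EqvGen.setoid (step f g))) →
    Quotient (Setoid.comap
      (fun w : {w : Fin l ⊕ Fin m // Closed3 f g h w} => eA2 w.1)
      (Relation.EqvGen.setoid (step3 f g h))) :=
  Quotient.lift
    (fun b => Quotient.mk _ ⟨Sum.inl b.1, closed3_of_fg f g h b.2⟩)
    (fun _ _ hbb => Quotient.sound (conn_fg_3 f g h hbb))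

def phiGFH (hgf : IsComp f g gf) : Quotient (Setoid.comap
      (fun c : {c : Fin m // IsClosedMid gf h c} =>
        (Sum.inr (Sum.inl c.1) : Fin k ⊕ (Fin m ⊕ Fin n)))
      (Relation.EqvGen.setoid (step gf h))) →
    Quotient (Setoid.comap
      (fun w : {w : Fin l ⊕ Fin m // Closed3 f g h w} => eA2 w.1)
      (Relation.EqvGen.setoid (step3 f g h))) :=
  Quotient.lift
    (fun c => Quotient.mk _ ⟨Sum.inr c.1, closed3_of_gfh f g h gf hgf c.2⟩)
    (fun _ _ hcc => Quotient.sound (conn_gfh_3 f g h gf hgf hcc))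

def phiGH : Quotient (Setoid.comap
      (fun c : {c : Fin m // IsClosedMid g h c} =>
        (Sum.inr (Sum.inl c.1) : Fin l ⊕ (Fin m ⊕ Fin n)))
      (Relation.EqvGen.setoid (step g h))) →
    Quotient (Setoid.comap
      (fun w : {w : Fin l ⊕ Fin m // Closed3 f g h w} => eA2 w.1)
      (Relation.EqvGen.setoid (step3 f g h))) :=
  Quotient.lift
    (fun c => Quotient.mk _ ⟨Sum.inr c.1, closed3_of_gh f g h c.2⟩)
    (fun _ _ hcc => Quotient.sound (conn_gh_3 f g h hcc))

def phiFHG (hhg : IsComp g h hg) : Quotient (Setoid.comap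
      (fun b : {b : Fin l // IsClosedMid f hg b} =>
        (Sum.inr (Sum.inl b.1) : Fin k ⊕ (Fin l ⊕ Fin n)))
      (Relation.EqvGen.setoid (step f hg))) →
    Quotient (Setoid.comap
      (fun w : {w : Fin l ⊕ Fin m // Closed3 f g h w} => eA2 w.1)
      (Relation.EqvGen.setoid (step3 f g h))) :=
  Quotient.lift
    (fun b => Quotient.mk _ ⟨Sum.inl b.1, closed3_of_fhg f g h hg hhg b.2⟩)
    (fun _ _ hbb => Quotient.sound (conn_fhg_3 f g h hg hhg hbb))

lemma count1 (hgf : IsComp f g gf) :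
    newClosed f g + newClosed gf h = closed3Count f g h := by
  classical
  unfold newClosed closed3Count
  rw [← Nat.card_sum]
  refine Nat.card_eq_of_bijective
    (Sum.elim (phiFG f g h) (phiGFH f g h gf hgf)) ⟨?_, ?_⟩
  · rintro (q1 | q1) (q2 | q2) heq
    · revert heq
      induction q1 using Quotient.ind with | _ b => ?_
      induction q2 using Quotient.ind with | _ b' => ?_
      intro heq
      obtain ⟨u, hu, hcu⟩ := conn3_of_closedB f g h b.2 (Quotient.exact heq)
      obtain rfl : u = Sum.inr (Sum.inl b'.1) :=
        eA12_inj (show eA12 u = eA12 (Sum.inr (Sum.inl b'.1)) from hu)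
      exact congrArg Sum.inl (Quotient.sound hcu)
    · revert heq
      induction q1 using Quotient.ind with | _ b => ?_
      induction q2 using Quotient.ind with | _ c => ?_
      intro heq
      obtain ⟨u, hu, hcu⟩ := conn3_of_closedB f g h b.2 (Quotient.exact heq)
      obtain rfl : u = Sum.inr (Sum.inr c.1) :=
        eA12_inj (show eA12 u = eA12 (Sum.inr (Sum.inr c.1)) from hu)
      exact absurd hcu (b.2 (Sum.inr c.1))
    · revert heq
      induction q1 using Quotient.ind with | _ c => ?_
      induction q2 using Quotient.ind with | _ b => ?_
      intro heq
      obtain ⟨u, hu, hcu⟩ := conn3_of_closedB f g h b.2 (Quotient.exact heq.symm)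
      obtain rfl : u = Sum.inr (Sum.inr c.1) :=
        eA12_inj (show eA12 u = eA12 (Sum.inr (Sum.inr c.1)) from hu)
      exact absurd hcu (b.2 (Sum.inr c.1))
    · revert heq
      induction q1 using Quotient.ind with | _ c => ?_
      induction q2 using Quotient.ind with | _ c' => ?_
      intro heq
      have hrel : conn3 f g h (iB (Sum.inr (Sum.inl c.1))) (iB (Sum.inr (Sum.inl c'.1))) :=
        Quotient.exact heq
      exact congrArg Sum.inr (Quotient.sound ((connB_iff f g h gf hgf _ _).mpr hrel))
  · intro q
    induction q using Quotient.ind with | _ wp => ?_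
    obtain ⟨w, hw⟩ := wp
    rcases w with b | c
    · by_cases hex : ∃ c : Fin m,
        Relation.EqvGen (step3 f g h) (eA2 (Sum.inl b)) (eA2 (Sum.inr c))
      · obtain ⟨c, hcon⟩ := hex
        have hcc : IsClosedMid gf h c := by
          intro z hz
          have h3 := (connB_iff f g h gf hgf _ _).mp hz
          rw [iB_embO] at h3
          exact hw z (Relation.EqvGen.trans _ _ _ hcon h3)
        exact ⟨Sum.inr (Quotient.mk _ ⟨c, hcc⟩),
          Quotient.sound (Relation.EqvGen.symm _ _ hcon)⟩
      · have hbc : IsClosedMid f g b := by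
          intro z hz
          have h3 := conn_fg_3 f g h hz
          rcases z with a | c
          · exact hw (Sum.inl a) h3
          · exact hex ⟨c, h3⟩
        exact ⟨Sum.inl (Quotient.mk _ ⟨b, hbc⟩),
          Quotient.sound (Relation.EqvGen.refl _)⟩
    · have hcc : IsClosedMid gf h c := by
        intro z hz
        have h3 := (connB_iff f g h gf hgf _ _).mp hz
        rw [iB_embO] at h3
        exact hw z h3
      exact ⟨Sum.inr (Quotient.mk _ ⟨c, hcc⟩),
        Quotient.sound (Relation.EqvGen.refl _)⟩

lemma count2 (hhg : IsComp g h hg) :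
    newClosed g h + newClosed f hg = closed3Count f g h := by
  classical
  unfold newClosed closed3Count
  rw [← Nat.card_sum]
  refine Nat.card_eq_of_bijective
    (Sum.elim (phiGH f g h) (phiFHG f g h hg hhg)) ⟨?_, ?_⟩
  · rintro (q1 | q1) (q2 | q2) heq
    · revert heq
      induction q1 using Quotient.ind with | _ c => ?_
      induction q2 using Quotient.ind with | _ c' => ?_
      intro heq
      obtain ⟨u, hu, hcu⟩ := conn3_of_closedC f g h c.2 (Quotient.exact heq)
      obtain rfl : u = Sum.inr (Sum.inl c'.1) :=
        Sum.inr_injective (show Sum.inr u = Sum.inr (Sum.inr (Sum.inl c'.1)) from hu)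
      exact congrArg Sum.inl (Quotient.sound hcu)
    · revert heq
      induction q1 using Quotient.ind with | _ c => ?_
      induction q2 using Quotient.ind with | _ b => ?_
      intro heq
      obtain ⟨u, hu, hcu⟩ := conn3_of_closedC f g h c.2 (Quotient.exact heq)
      obtain rfl : u = Sum.inl b.1 :=
        Sum.inr_injective (show Sum.inr u = Sum.inr (Sum.inl b.1) from hu)
      exact absurd hcu (c.2 (Sum.inl b.1))
    · revert heq
      induction q1 using Quotient.ind with | _ b => ?_
      induction q2 using Quotient.ind with | _ c => ?_
      intro heq
      obtain ⟨u, hu, hcu⟩ := conn3_of_closedC f g h c.2 (Quotient.exact heq.symm)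
      obtain rfl : u = Sum.inl b.1 :=
        Sum.inr_injective (show Sum.inr u = Sum.inr (Sum.inl b.1) from hu)
      exact absurd hcu (c.2 (Sum.inl b.1))
    · revert heq
      induction q1 using Quotient.ind with | _ b => ?_
      induction q2 using Quotient.ind with | _ b' => ?_
      intro heq
      have hrel : conn3 f g h (iC (Sum.inr (Sum.inl b.1))) (iC (Sum.inr (Sum.inl b'.1))) :=
        Quotient.exact heq
      exact congrArg Sum.inr (Quotient.sound ((connC_iff f g h hg hhg _ _).mpr hrel))
  · intro q
    induction q using Quotient.ind with | _ wp => ?_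
    obtain ⟨w, hw⟩ := wp
    rcases w with b | c
    · have hbc : IsClosedMid f hg b := by
        intro z hz
        have h3 := (connC_iff f g h hg hhg _ _).mp hz
        rw [iC_embO] at h3
        exact hw z h3
      exact ⟨Sum.inr (Quotient.mk _ ⟨b, hbc⟩),
        Quotient.sound (Relation.EqvGen.refl _)⟩
    · by_cases hex : ∃ b : Fin l,
        Relation.EqvGen (step3 f g h) (eA2 (Sum.inr c)) (eA2 (Sum.inl b))
      · obtain ⟨b, hcon⟩ := hex
        have hbc : IsClosedMid f hg b := by
          intro z hz
          have h3 := (connC_iff f g h hg hhg _ _).mp hz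
          rw [iC_embO] at h3
          exact hw z (Relation.EqvGen.trans _ _ _ hcon h3)
        exact ⟨Sum.inr (Quotient.mk _ ⟨b, hbc⟩),
          Quotient.sound (Relation.EqvGen.symm _ _ hcon)⟩
      · have hcc : IsClosedMid g h c := by
          intro z hz
          have h3 := conn_gh_3 f g h hz
          rcases z with b | d
          · exact hex ⟨b, h3⟩
          · exact hw (Sum.inr d) h3
        exact ⟨Sum.inl (Quotient.mk _ ⟨c, hcc⟩),
          Quotient.sound (Relation.EqvGen.refl _)⟩

end BrauerAssocAux


/-- Vertical composition of Brauer diagrams (specified by `IsComp`, whose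
pairing is the composition pairing and whose closed-component count satisfies
`κ(g∘f) = κ(f) + κ(g) + k(τ_f, τ_g)`) is associative:
for `f : k → l`, `g : l → m`, `h : m → n`, one has `h ∘ (g ∘ f) = (h ∘ g) ∘ f`. -/
theorem brauer_comp_assoc {k l m n : ℕ}
    (f : BrauerDiagram k l) (g : BrauerDiagram l m) (h : BrauerDiagram m n)
    (gf : BrauerDiagram k m) (hg : BrauerDiagram l n) (L R : BrauerDiagram k n)
    (hgf : IsComp f g gf) (hhg : IsComp g h hg)
    (hL : IsComp gf h L) (hR : IsComp f hg R) :
    L = R := by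
  have key : ∀ x y : Fin k ⊕ Fin n, L.τ x = y ↔ R.τ x = y := by
    intro x y
    rw [hL.1, hR.1]
    have hiff : conn gf h (embO x) (embO y) ↔ conn f hg (embO x) (embO y) := by
      rw [connB_iff f g h gf hgf, connC_iff f g h hg hhg,
        iB_embO, iB_embO, iC_embO, iC_embO]
    rw [hiff]
  have hτ : L.τ = R.τ := funext fun x => ((key x (L.τ x)).mp rfl).symm
  have hcl : L.closed = R.closed := by
    have c1 := count1 f g h gf hgf
    have c2 := count2 f g h hg hhg
    rw [hL.2, hR.2, hgf.2, hhg.2]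
    omega
  obtain ⟨τL, invL, nofL, cL⟩ := L
  obtain ⟨τR, invR, nofR, cR⟩ := R
  have h1 : τL = τR := hτ
  have h2 : cL = cR := hcl
  subst h1
  subst h2
  rfl
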